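/- Let f : ℝⁿ → ℝ be locally Lipschitz and directionally differentiable, and let f̂ : ℝⁿ → ℝ be continuously differentiable with f̂(s) ≥ f(s) for all s and f̂(w) = f(w) at a point w. Then ∇f̂(w) belongs to the Clarke subdifferential ∂_C f(w). -/

import Mathlib

open Filter

/-- Directional derivative of a `C¹` function along direction `v`. -/
theorem c1_dir_deriv {n : ℕ} (fhat : EuclideanSpace ℝ (Fin n) → ℝ)
    (w v : EuclideanSpace ℝ (Fin n)) (hsm : ContDiff ℝ 1 fhat) :
    Tendsto (fun t : ℝ => (fhat (w + t • v) - fhat w) / t)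
      (nhdsWithin 0 (Set.Ioi 0)) (nhds (inner ℝ (gradient fhat w) v : ℝ)) := by
  have hdiff : DifferentiableAt ℝ fhat w := (hsm.differentiable one_ne_zero).differentiableAt
  have hfd : HasFDerivAt fhat ((InnerProductSpace.toDual ℝ _) (gradient fhat w)) w :=
    hdiff.hasGradientAt.hasFDerivAt
  have hline : HasDerivAt (fun t : ℝ => w + t • v) v 0 := by
    simpa using ((hasDerivAt_id (0:ℝ)).smul_const v).const_add w
  have hcomp : HasDerivAt (fun t : ℝ => fhat (w + t • v))
      (inner ℝ (gradient fhat w) v : ℝ) 0 := by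
    have := hfd.comp_hasDerivAt_of_eq (0:ℝ) hline (by simp)
    simp only [InnerProductSpace.toDual_apply_apply] at this; exact this
  have h2 := (hasDerivAt_iff_tendsto_slope.mp hcomp).mono_left
    (nhdsWithin_mono 0 (by intro x hx; exact ne_of_gt hx : Set.Ioi (0:ℝ) ⊆ {0}ᶜ))
  refine h2.congr fun t => ?_
  simp [slope]; ring

/-- If `f` is locally Lipschitz and directionally differentiable, and the
`C¹` function `f̂` majorizes `f` everywhere and touches it at `w`, then
`∇f̂(w)` belongs to the Clarke subdifferential of `f` at `w`, i.e.
`⟪∇f̂(w), r⟫ ≤ f°(w; r)` for every direction `r`. -/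
theorem gradient_mem_clarke_subdifferential
    (n : ℕ) (f fhat : EuclideanSpace ℝ (Fin n) → ℝ)
    (w : EuclideanSpace ℝ (Fin n))
    (hlip : LocallyLipschitz f)
    (hdd : ∀ r : EuclideanSpace ℝ (Fin n), ∃ L : ℝ,
      Tendsto (fun t : ℝ => (f (w + t • r) - f w) / t)
        (nhdsWithin 0 (Set.Ioi 0)) (nhds L))
    (hsm : ContDiff ℝ 1 fhat)
    (hmaj : ∀ s, f s ≤ fhat s) (htouch : fhat w = f w) :
    ∀ r : EuclideanSpace ℝ (Fin n),
      (inner ℝ (gradient fhat w) r : ℝ) ≤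
        Filter.limsup
          (fun q : EuclideanSpace ℝ (Fin n) × ℝ => (f (q.1 + q.2 • r) - f q.1) / q.2)
          ((nhds w) ×ˢ (nhdsWithin 0 (Set.Ioi 0))) := by
  intro r
  set l : Filter ℝ := nhdsWithin 0 (Set.Ioi 0) with hl
  set F : Filter (EuclideanSpace ℝ (Fin n) × ℝ) := (nhds w) ×ˢ l with hF
  set u : EuclideanSpace ℝ (Fin n) × ℝ → ℝ :=
    fun q => (f (q.1 + q.2 • r) - f q.1) / q.2 with hu
  obtain ⟨L, hL⟩ := hdd (-r)
  -- Step 1: L ≤ ⟨∇f̂ w, -r⟩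
  have hfq := c1_dir_deriv fhat w (-r) hsm
  have hLle : L ≤ (inner ℝ (gradient fhat w) (-r) : ℝ) := by
    refine le_of_tendsto_of_tendsto hL hfq ?_
    filter_upwards [self_mem_nhdsWithin] with t (ht : (0:ℝ) < t)
    have h1 : f (w + t • (-r)) - f w ≤ fhat (w + t • (-r)) - fhat w := by
      have := hmaj (w + t • (-r)); linarith [htouch]
    exact div_le_div_of_nonneg_right h1 ht.le |>.trans_eq rfl
  have hkey : (inner ℝ (gradient fhat w) r : ℝ) ≤ -L := by
    have : (inner ℝ (gradient fhat w) (-r) : ℝ) = -(inner ℝ (gradient fhat w) r : ℝ) := by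
      simp
    linarith [hLle, this ▸ hLle]
  -- Step 2: the curve m t = (w - t•r, t) tends to the product filter
  set m : ℝ → EuclideanSpace ℝ (Fin n) × ℝ := fun t => (w - t • r, t) with hm
  have htm : Tendsto m l F := by
    refine Tendsto.prodMk ?_ (by exact tendsto_id)
    have hc : Continuous fun t : ℝ => w - t • r :=
      continuous_const.sub (continuous_id.smul continuous_const)
    have := hc.tendsto 0
    simp only [zero_smul, sub_zero] at this
    exact this.mono_left nhdsWithin_le_nhds
  -- Step 3: u ∘ m tends to -L
  have hum : Tendsto (u ∘ m) l (nhds (-L)) := by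
    refine hL.neg.congr fun t => ?_
    have h1 : w + t • (-r) = w - t • r := by
      rw [smul_neg, sub_eq_add_neg]
    have h2 : w - t • r + t • r = w := by abel
    simp only [hu, hm, Function.comp, h2]
    rw [h1, ← neg_div, neg_sub]
  have hmap : Tendsto u (map m l) (nhds (-L)) := tendsto_map'_iff.mpr hum
  -- Step 4: boundedness from local Lipschitz
  obtain ⟨K, U, hU, hK⟩ := hlip w
  obtain ⟨ε, hε, hball⟩ := Metric.mem_nhds_iff.mp hU
  set δ : ℝ := ε / (2 * (‖r‖ + 1)) with hδdef
  have hrpos : (0:ℝ) < ‖r‖ + 1 := by positivity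
  have hδpos : 0 < δ := by positivity
  have hbdd : IsBoundedUnder (· ≤ ·) F u := by
    refine ⟨K * ‖r‖, eventually_map.mpr ?_⟩
    have hmemF : (Metric.ball w (ε/2)) ×ˢ (Set.Ioo 0 δ) ∈ F :=
      Filter.prod_mem_prod (Metric.ball_mem_nhds w (by positivity))
        (Ioo_mem_nhdsGT_of_mem ⟨le_refl 0, hδpos⟩)
    filter_upwards [hmemF] with q hq
    obtain ⟨hq1, hq2⟩ := hq
    have ht0 : (0:ℝ) < q.2 := hq2.1
    have htδ : q.2 < δ := hq2.2
    have hq1U : q.1 ∈ U := hball (Metric.ball_subset_ball (by linarith) hq1)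
    have hq2U : q.1 + q.2 • r ∈ U := by
      apply hball
      have : dist (q.1 + q.2 • r) w ≤ dist q.1 w + ‖q.2 • r‖ := by
        calc dist (q.1 + q.2 • r) w ≤ dist (q.1 + q.2 • r) q.1 + dist q.1 w :=
              dist_triangle _ _ _
          _ = ‖q.2 • r‖ + dist q.1 w := by rw [dist_eq_norm]; simp
          _ = dist q.1 w + ‖q.2 • r‖ := by ring
      have hsr : ‖q.2 • r‖ < ε / 2 := by
        rw [norm_smul, Real.norm_eq_abs, abs_of_pos ht0]
        have h1 : q.2 * ‖r‖ < δ * (‖r‖ + 1) := by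
          have : q.2 * ‖r‖ ≤ q.2 * (‖r‖ + 1) := by nlinarith [norm_nonneg r]
          have : q.2 * (‖r‖ + 1) < δ * (‖r‖ + 1) := by nlinarith
          linarith [mul_le_mul_of_nonneg_left (le_refl (‖r‖+1)) (le_of_lt ht0)]
        have h2 : δ * (‖r‖ + 1) = ε / 2 := by
          rw [hδdef]; field_simp
        linarith
      have hq1w : dist q.1 w < ε / 2 := hq1
      exact Metric.mem_ball.mpr (by linarith)
    have hlipb := hK.dist_le_mul _ hq2U _ hq1U
    have : f (q.1 + q.2 • r) - f q.1 ≤ K * (q.2 * ‖r‖) := by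
      have h1 : dist (f (q.1 + q.2 • r)) (f q.1) = |f (q.1 + q.2 • r) - f q.1| :=
        Real.dist_eq _ _
      have h2 : dist (q.1 + q.2 • r) q.1 = q.2 * ‖r‖ := by
        rw [dist_eq_norm]
        simp [norm_smul, Real.norm_eq_abs, abs_of_pos ht0]
      calc f (q.1 + q.2 • r) - f q.1 ≤ |f (q.1 + q.2 • r) - f q.1| := le_abs_self _
        _ = dist (f (q.1 + q.2 • r)) (f q.1) := h1.symm
        _ ≤ K * dist (q.1 + q.2 • r) q.1 := hlipb
        _ = K * (q.2 * ‖r‖) := by rw [h2]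
    show u q ≤ K * ‖r‖
    rw [hu]
    rw [div_le_iff₀ ht0]
    calc f (q.1 + q.2 • r) - f q.1 ≤ K * (q.2 * ‖r‖) := this
      _ = K * ‖r‖ * q.2 := by ring
  -- Step 5: put it together
  have hNeBot : (map m l).NeBot := by
    have : l.NeBot := by rw [hl]; infer_instance
    exact Filter.map_neBot
  have hcob : IsCoboundedUnder (· ≤ ·) (map m l) u :=
    hmap.isCoboundedUnder_le
  have heq : limsup u (map m l) = -L := hmap.limsup_eq
  have hle : limsup u (map m l) ≤ limsup u F :=
    limsup_le_limsup_of_le htm hcob hbdd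
  calc (inner ℝ (gradient fhat w) r : ℝ) ≤ -L := hkey
    _ = limsup u (map m l) := heq.symm
    _ ≤ limsup u F := hle
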